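/- Let a group G act by k-algebra automorphisms on a k-algebra R and let P be a prime ideal of R with finite G-orbit. Then the canonical surjection R/(P:G) → R/P induces an isomorphism of fields C(R/(P:G))^G ≅ C(R/P)^{G_P}, where G_P is the stabilizer of P in G. -/

import Mathlib

open Pointwise

/-- `(Q, ι)` is a right Amitsur–Martindale ring of quotients of `R`. -/
structure IsMartindaleQuot {R Q : Type*} [Ring R] [Ring Q] (ι : R →+* Q) : Prop where
  inj : Function.Injective ι
  dom : ∀ q : Q, ∃ I : TwoSidedIdeal R,
    (∀ r : R, (∀ x ∈ I, r * x = 0) → r = 0) ∧ ∀ x ∈ I, ∃ r : R, q * ι x = ι r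
  ann : ∀ (q : Q) (I : TwoSidedIdeal R), (∀ r : R, (∀ x ∈ I, r * x = 0) → r = 0) →
    (∀ x ∈ I, q * ι x = 0) → q = 0
  lift : ∀ (I : TwoSidedIdeal R) (f : R → R),
    (∀ r : R, (∀ x ∈ I, r * x = 0) → r = 0) →
    (∀ x ∈ I, ∀ y ∈ I, f (x + y) = f x + f y) →
    (∀ x ∈ I, ∀ r : R, f (x * r) = f x * r) →
    ∃ q : Q, ∀ x ∈ I, q * ι x = ι (f x)

/-- A two-sided ideal `P` of a ring `R` is prime if `P ≠ R` and `AB ⊆ P` implies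
`A ⊆ P` or `B ⊆ P`. -/
def IsPrimeTwoSided {R : Type*} [Ring R] (P : TwoSidedIdeal R) : Prop :=
  P ≠ ⊤ ∧ ∀ A B : TwoSidedIdeal R, (∀ a ∈ A, ∀ b ∈ B, a * b ∈ P) → A ≤ P ∨ B ≤ P

/-- The subring of `G`-invariant central elements of `Q`; when `Q` is the
Amitsur–Martindale quotient ring of a ring, this is the invariant subring of the
extended centroid. -/
def invCenter (G Q : Type*) [Group G] [Ring Q] [MulSemiringAction G Q] :
    Subring Q where
  carrier := {q : Q | q ∈ Subring.center Q ∧ ∀ g : G, g • q = q}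
  one_mem' := ⟨Subring.one_mem _, fun g => smul_one g⟩
  mul_mem' := fun ha hb =>
    ⟨mul_mem ha.1 hb.1, fun g => by rw [smul_mul', ha.2, hb.2]⟩
  zero_mem' := ⟨Subring.zero_mem _, fun g => smul_zero g⟩
  add_mem' := fun ha hb =>
    ⟨add_mem ha.1 hb.1, fun g => by rw [smul_add, ha.2, hb.2]⟩
  neg_mem' := fun ha => ⟨neg_mem ha.1, fun g => by rw [smul_neg, ha.2]⟩

/-- The stabilizer `G_P` of the ideal `P` in `G` (acting pointwise on subsets). -/
def idealStab (G : Type*) {R : Type*} [Group G] [Ring R] [MulSemiringAction G R]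
    (P : TwoSidedIdeal R) : Subgroup G :=
  MulAction.stabilizer G (P : Set R)

/-- Let a group `G` act by `k`-algebra automorphisms on a `k`-algebra `R` and let `P`
be a prime ideal of `R` with finite `G`-orbit. Let `R₁ = R/(P:G)` and `R₂ = R/P` with
their induced actions of `G` and of the stabilizer `G_P`, and let `Q₁`, `Q₂` be
Amitsur–Martindale quotient rings of `R₁`, `R₂` with the (unique) extended actions.
Then the canonical surjection `R/(P:G) → R/P` induces an isomorphism of fields
`C(R/(P:G))^G ≅ C(R/P)^{G_P}`. -/
lemma central_of_comm_image {R Q : Type*} [Ring R] [Ring Q] {ι : R →+* Q}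
    (hQ : IsMartindaleQuot ι) {q : Q} (h : ∀ r : R, q * ι r = ι r * q) :
    q ∈ Subring.center Q := by
  rw [Subring.mem_center_iff]
  intro u
  obtain ⟨J, hJd, hJdom⟩ := hQ.dom u
  have h0 : ∀ x ∈ J, (u * q - q * u) * ι x = 0 := by
    intro x hx
    obtain ⟨r, hr⟩ := hJdom x hx
    have e1 : u * q * ι x = ι r * q := by
      rw [mul_assoc, h x, ← mul_assoc, hr]
    have e2 : q * u * ι x = q * ι r := by rw [mul_assoc, hr]
    rw [sub_mul, e1, e2, h r, sub_self]
  exact sub_eq_zero.mp (hQ.ann _ J hJd h0)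

lemma prime_step {R : Type*} [Ring R] {P : TwoSidedIdeal R}
    (hP : IsPrimeTwoSided P) {a q : R} (ha : a ∉ P) (hq : q ∉ P) :
    ∃ r : R, a * r * q ∉ P := by
  by_contra hcon
  push_neg at hcon
  set A : TwoSidedIdeal R := TwoSidedIdeal.mk' {x | ∀ r, x * r * q ∈ P}
    (by intro r; simpa using P.zero_mem)
    (by intro x y hx hy r; have := P.add_mem (hx r) (hy r); simpa [add_mul] using this)
    (by intro x hx r; have := P.neg_mem (hx r); simpa [neg_mul] using this)
    (by intro s x hx r
        have := P.mul_mem_left s (x * r * q) (hx r)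
        simpa [mul_assoc] using this)
    (by intro x s hx r
        have := hx (s * r)
        simpa [mul_assoc] using this) with hA
  set B : TwoSidedIdeal R := TwoSidedIdeal.mk' {y | ∀ x, (∀ r, x * r * q ∈ P) → x * y ∈ P}
    (by intro x _; simpa using P.zero_mem)
    (by intro y z hy hz x hx; have := P.add_mem (hy x hx) (hz x hx); simpa [mul_add] using this)
    (by intro y hy x hx; have := P.neg_mem (hy x hx); simpa [mul_neg] using this)
    (by intro s y hy x hx
        have hxs : ∀ r, (x * s) * r * q ∈ P := by
          intro r; have := hx (s * r); simpa [mul_assoc] using this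
        have := hy (x * s) hxs
        simpa [mul_assoc] using this)
    (by intro y s hy x hx
        have := P.mul_mem_right (x * y) s (hy x hx)
        simpa [mul_assoc] using this) with hB
  have hAB : ∀ x ∈ A, ∀ y ∈ B, x * y ∈ P := by
    intro x hx y hy
    rw [hA, TwoSidedIdeal.mem_mk'] at hx
    rw [hB, TwoSidedIdeal.mem_mk'] at hy
    exact hy x hx
  rcases hP.2 A B hAB with h | h
  · exact ha (h (by rw [hA, TwoSidedIdeal.mem_mk']; exact hcon))
  · refine hq (h ?_)
    rw [hB, TwoSidedIdeal.mem_mk']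
    intro x hx
    simpa using hx 1

set_option maxHeartbeats 4000000 in
theorem invariant_centroid_iso_of_finite_orbit
    {k : Type*} [Field k] {G R : Type*} [Group G] [Ring R] [Algebra k R]
    [MulSemiringAction G R] [SMulCommClass G k R]
    (P : TwoSidedIdeal R) (hP : IsPrimeTwoSided P)
    (hfin : (MulAction.orbit G (P : Set R)).Finite)
    -- R₁ = R/(P:G) with its G-action
    {R₁ : Type*} [Ring R₁] (π₁ : R →+* R₁) (hπ₁ : Function.Surjective π₁)
    (hker₁ : ∀ r : R, π₁ r = 0 ↔ ∀ g : G, g • r ∈ P)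
    [MulSemiringAction G R₁] (hπ₁e : ∀ (g : G) (r : R), π₁ (g • r) = g • π₁ r)
    {Q₁ : Type*} [Ring Q₁] (ι₁ : R₁ →+* Q₁) (hQ₁ : IsMartindaleQuot ι₁)
    [MulSemiringAction G Q₁] (hι₁e : ∀ (g : G) (x : R₁), g • ι₁ x = ι₁ (g • x))
    -- R₂ = R/P with its G_P-action
    {R₂ : Type*} [Ring R₂] (π₂ : R →+* R₂) (hπ₂ : Function.Surjective π₂)
    (hker₂ : ∀ r : R, π₂ r = 0 ↔ r ∈ P)
    [MulSemiringAction (idealStab G P) R₂]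
    (hπ₂e : ∀ (h : idealStab G P) (r : R), π₂ ((h : G) • r) = h • π₂ r)
    {Q₂ : Type*} [Ring Q₂] (ι₂ : R₂ →+* Q₂) (hQ₂ : IsMartindaleQuot ι₂)
    [MulSemiringAction (idealStab G P) Q₂]
    (hι₂e : ∀ (h : idealStab G P) (x : R₂), h • ι₂ x = ι₂ (h • x)) :
    ∃ e : invCenter G Q₁ ≃+* invCenter (idealStab G P) Q₂,
      ∀ (c : invCenter G Q₁) (x y : R),
        (c : Q₁) * ι₁ (π₁ x) = ι₁ (π₁ y) →
        (e c : Q₂) * ι₂ (π₂ x) = ι₂ (π₂ y) := by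
  classical
  -- 1 ∉ P
  have hone : (1 : R) ∉ P := fun h1 => hP.1 (P.one_mem_iff.mp h1)
  -- stabilizer action on P
  have hstabP : ∀ g : G, g ∈ idealStab G P → ∀ r : R, r ∈ P → g • r ∈ P := by
    intro g hg r hr
    have h1 : g • (P : Set R) = (P : Set R) := hg
    have h2 : g • r ∈ g • (P : Set R) := Set.smul_mem_smul_set hr
    rwa [h1] at h2
  -- membership in smul sets
  have hsmulmem : ∀ (g : G) (s : Set R) (r : R), r ∈ g • s ↔ g⁻¹ • r ∈ s := by
    intro g s r; exact Set.mem_smul_set_iff_inv_smul_mem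
  -- N
  set inN : R → Prop := fun r => ∀ g : G, g ∉ idealStab G P → g • r ∈ P with hinN
  have hNadd : ∀ a b, inN a → inN b → inN (a + b) := by
    intro a b ha hb g hg; rw [smul_add]; exact P.add_mem (ha g hg) (hb g hg)
  have hNneg : ∀ a, inN a → inN (-a) := by
    intro a ha g hg; rw [smul_neg]; exact P.neg_mem (ha g hg)
  have hNmulL : ∀ (s a : R), inN a → inN (s * a) := by
    intro s a ha g hg; rw [smul_mul']; exact P.mul_mem_left _ _ (ha g hg)
  have hNmulR : ∀ (a s : R), inN a → inN (a * s) := by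
    intro a s ha g hg; rw [smul_mul']; exact P.mul_mem_right _ _ (ha g hg)
  have hNsmul : ∀ (σ : G), σ ∈ idealStab G P → ∀ a, inN a → inN (σ • a) := by
    intro σ hσ a ha g hg
    rw [← mul_smul]
    exact ha (g * σ) (fun hmem => hg (by simpa using Subgroup.mul_mem _ hmem (inv_mem hσ)))
  -- N ∩ P ⊆ ker π₁
  have hNP : ∀ r, inN r → r ∈ P → π₁ r = 0 := by
    intro r hN hPr
    rw [hker₁]
    intro g
    by_cases hg : g ∈ idealStab G P
    · exact hstabP g hg r hPr
    · exact hN g hg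
  have hkerP : ∀ r, π₁ r = 0 → r ∈ P := by
    intro r hr
    have := (hker₁ r).mp hr 1
    simpa using this
  -- incomparability within the orbit
  have hinc : ∀ g : G, g • (P : Set R) ⊆ (P : Set R) → g • (P : Set R) = (P : Set R) := by
    intro g hsub
    have hmapsTo : Set.MapsTo (fun m : ℕ => g ^ m • (P : Set R)) Set.univ
        (MulAction.orbit G (P : Set R)) := fun m _ => MulAction.mem_orbit _ (g ^ m)
    obtain ⟨i, -, j, -, hne, heq⟩ :=
      Set.infinite_univ.exists_ne_map_eq_of_mapsTo hmapsTo hfin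
    have hstep : ∀ m : ℕ, g ^ (m + 1) • (P : Set R) ⊆ g ^ m • (P : Set R) := by
      intro m
      rw [pow_succ, mul_smul]
      exact Set.smul_set_mono hsub
    have hchain : ∀ m n : ℕ, m ≤ n → g ^ n • (P : Set R) ⊆ g ^ m • (P : Set R) := by
      intro m n hmn
      induction n, hmn using Nat.le_induction with
      | base => exact subset_rfl
      | succ n hmn ih => exact (hstep n).trans ih
    have key : ∀ i j : ℕ, i < j → g ^ i • (P : Set R) = g ^ j • (P : Set R) →
        (P : Set R) ⊆ g • (P : Set R) := by
      intro i j hij heq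
      have h1 : g ^ i • (P : Set R) ⊆ g ^ (i + 1) • (P : Set R) := by
        rw [heq]; exact hchain _ _ hij
      rw [pow_succ, mul_smul] at h1
      exact Set.smul_set_subset_smul_set_iff.mp h1
    rcases lt_or_gt_of_ne hne with h | h
    · exact le_antisymm hsub (key i j h heq)
    · exact le_antisymm hsub (key j i h heq.symm)
  -- orbit elements absorb multiplication
  have horb_mulL : ∀ Q' ∈ MulAction.orbit G (P : Set R), ∀ a ∈ Q', ∀ s : R, s * a ∈ Q' := by
    rintro Q' ⟨g, rfl⟩ a ha s
    rw [hsmulmem] at ha ⊢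
    rw [smul_mul']
    exact P.mul_mem_left _ _ ha
  have horb_mulR : ∀ Q' ∈ MulAction.orbit G (P : Set R), ∀ a ∈ Q', ∀ s : R, a * s ∈ Q' := by
    rintro Q' ⟨g, rfl⟩ a ha s
    rw [hsmulmem] at ha ⊢
    rw [smul_mul']
    exact P.mul_mem_right _ _ ha
  -- the key finiteness lemma: an element of all orbit primes except P, outside P
  have hind : ∀ T : Finset (Set R), (∀ Q' ∈ T, Q' ∈ MulAction.orbit G (P : Set R)) →
      ∃ n₀ : R, n₀ ∉ P ∧ ∀ Q' ∈ T, Q' ≠ (P : Set R) → n₀ ∈ Q' := by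
    intro T
    induction T using Finset.induction_on with
    | empty => exact fun _ => ⟨1, hone, by simp⟩
    | @insert Q' T hQT ih =>
      intro hmem
      obtain ⟨n₀, hn₀P, hn₀⟩ := ih fun Q hQ => hmem Q (Finset.mem_insert_of_mem hQ)
      by_cases hQP : Q' = (P : Set R)
      · refine ⟨n₀, hn₀P, fun Q hQ hne => ?_⟩
        rcases Finset.mem_insert.mp hQ with rfl | hQ
        · exact absurd hQP hne
        · exact hn₀ Q hQ hne
      · have hQorb : Q' ∈ MulAction.orbit G (P : Set R) := hmem Q' (Finset.mem_insert_self _ _)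
        have hpick : ∃ q, q ∈ Q' ∧ q ∉ P := by
          by_contra hc
          push_neg at hc
          obtain ⟨g, rfl⟩ := hQorb
          exact hQP (hinc g fun x hx => hc x hx)
        obtain ⟨q, hqQ, hqP⟩ := hpick
        obtain ⟨r, hr⟩ := prime_step hP hn₀P hqP
        refine ⟨n₀ * r * q, hr, ?_⟩
        intro Q hQ hne
        rcases Finset.mem_insert.mp hQ with rfl | hQ
        · exact horb_mulL Q hQorb q hqQ (n₀ * r)
        · have h1 := hn₀ Q hQ hne
          have h2 := horb_mulR Q (hmem Q (Finset.mem_insert_of_mem hQ)) n₀ h1 (r * q)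
          simpa [mul_assoc] using h2
  obtain ⟨n₀, hn₀P, hn₀orb⟩ :=
    hind hfin.toFinset (fun Q hQ => (Set.Finite.mem_toFinset hfin).mp hQ)
  have hn₀N : inN n₀ := by
    intro g hg
    have h1 : (g⁻¹ • (P : Set R)) ≠ (P : Set R) := by
      intro h
      have : g⁻¹ ∈ idealStab G P := MulAction.mem_stabilizer_iff.mpr h
      exact hg (by simpa using inv_mem this)
    have h2 : g⁻¹ • (P : Set R) ∈ MulAction.orbit G (P : Set R) := MulAction.mem_orbit _ _
    have h3 := hn₀orb _ ((Set.Finite.mem_toFinset hfin).mpr h2) h1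
    rw [hsmulmem] at h3
    simpa using h3
  -- dense multiplication lemma from primality
  have hLP : ∀ y : R, (∀ a, inN a → a * y ∈ P) → y ∈ P := by
    intro y hy
    by_contra hyP
    obtain ⟨r, hr⟩ := prime_step hP hn₀P hyP
    exact hr (hy (n₀ * r) (hNmulR _ _ hn₀N))
  -- transfer density to R₂
  have hdense₂gen : ∀ W : TwoSidedIdeal R₁, (∀ r : R₁, (∀ x ∈ W, r * x = 0) → r = 0) →
      ∀ s : R, (∀ v : R, π₁ v ∈ W → s * v ∈ P) → s ∈ P := by
    intro W hWd s hs
    refine hLP s ?_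
    intro a ha
    apply hkerP
    apply hWd
    intro x hx
    obtain ⟨v, rfl⟩ := hπ₁ x
    rw [← map_mul, mul_assoc]
    exact hNP _ (hNmulR _ _ ha) (P.mul_mem_left _ _ (hs v hx))
  have hι₂P : ∀ r : R, ι₂ (π₂ r) = 0 ↔ r ∈ P := by
    intro r
    constructor
    · intro h
      exact (hker₂ r).mp (hQ₂.inj (by rw [h, map_zero]))
    · intro h
      rw [(hker₂ r).mpr h, map_zero]
  have hπ₂eq : ∀ x y : R, x - y ∈ P → π₂ x = π₂ y := by
    intro x y h
    have := (hker₂ (x - y)).mpr h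
    rw [map_sub, sub_eq_zero] at this
    exact this
  -- generic induced dense ideal in R₂
  have mkZ : ∀ W : TwoSidedIdeal R₁, (∀ r : R₁, (∀ x ∈ W, r * x = 0) → r = 0) →
      ∃ Z : TwoSidedIdeal R₂, (∀ r : R₂, (∀ z ∈ Z, r * z = 0) → r = 0) ∧
        (∀ z, z ∈ Z ↔ ∃ m : R, π₁ m ∈ W ∧ π₂ m = z) := by
    intro W hWd
    obtain ⟨Z, hZmem⟩ : ∃ Z : TwoSidedIdeal R₂,
        ∀ z, z ∈ Z ↔ ∃ m : R, π₁ m ∈ W ∧ π₂ m = z := by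
      refine ⟨TwoSidedIdeal.mk' {z | ∃ m : R, π₁ m ∈ W ∧ π₂ m = z} ?_ ?_ ?_ ?_ ?_,
        fun z => TwoSidedIdeal.mem_mk' _ _ _ _ _ _ z⟩
      · exact ⟨0, by simpa using W.zero_mem, map_zero π₂⟩
      · intro x y hx hy
        obtain ⟨m, hm, rfl⟩ := hx; obtain ⟨m', hm', rfl⟩ := hy
        exact ⟨m + m', by rw [map_add]; exact W.add_mem hm hm', by rw [map_add]⟩
      · intro x hx
        obtain ⟨m, hm, rfl⟩ := hx
        exact ⟨-m, by rw [map_neg]; exact W.neg_mem hm, by rw [map_neg]⟩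
      · intro x y hy
        obtain ⟨m, hm, rfl⟩ := hy
        obtain ⟨s, rfl⟩ := hπ₂ x
        exact ⟨s * m, by rw [map_mul]; exact W.mul_mem_left _ _ hm, by rw [map_mul]⟩
      · intro x y hx
        obtain ⟨m, hm, rfl⟩ := hx
        obtain ⟨s, rfl⟩ := hπ₂ y
        exact ⟨m * s, by rw [map_mul]; exact W.mul_mem_right _ _ hm, by rw [map_mul]⟩
    refine ⟨Z, ?_, hZmem⟩
    intro r₂ hr₂
    obtain ⟨s, rfl⟩ := hπ₂ r₂
    rw [hker₂]
    apply hdense₂gen W hWd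
    intro v hv
    rw [← hker₂, map_mul]
    exact hr₂ _ ((hZmem _).mpr ⟨v, hv, rfl⟩)
  -- THE FORWARD CONSTRUCTION
  have FWD : ∀ c : Q₁, (∀ u : Q₁, u * c = c * u) → (∀ g : G, g • c = c) →
      ∃ q₂ : Q₂, (q₂ ∈ Subring.center Q₂ ∧ ∀ h : idealStab G P, h • q₂ = q₂) ∧
        (∀ x y : R, c * ι₁ (π₁ x) = ι₁ (π₁ y) → q₂ * ι₂ (π₂ x) = ι₂ (π₂ y)) ∧
        (∀ q' : Q₂, (∀ x y : R, c * ι₁ (π₁ x) = ι₁ (π₁ y) → q' * ι₂ (π₂ x) = ι₂ (π₂ y)) →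
          q' = q₂) ∧
        (∀ x y : R, inN x → inN y → q₂ * ι₂ (π₂ x) = ι₂ (π₂ y) →
          c * ι₁ (π₁ x) = ι₁ (π₁ y)) := by
    intro c hc hcG
    obtain ⟨W, hWd, hWdom⟩ := hQ₁.dom c
    have hpair : ∀ x : R, π₁ x ∈ W → ∃ y, c * ι₁ (π₁ x) = ι₁ (π₁ y) := by
      intro x hx
      obtain ⟨r, hr⟩ := hWdom _ hx
      obtain ⟨y, rfl⟩ := hπ₁ r
      exact ⟨y, hr⟩
    have keyP : ∀ x y : R, x ∈ P → c * ι₁ (π₁ x) = ι₁ (π₁ y) → y ∈ P := by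
      intro x y hxP hxy
      apply hLP
      intro a ha
      have h1 : π₁ (a * x) = 0 := hNP _ (hNmulR _ _ ha) (P.mul_mem_left _ _ hxP)
      have h2 : ι₁ (π₁ (a * y)) = 0 := by
        rw [map_mul, map_mul, ← hxy, ← mul_assoc, hc (ι₁ (π₁ a)), mul_assoc, ← map_mul,
          ← map_mul, h1, map_zero, mul_zero]
      exact hkerP _ (hQ₁.inj (by rw [h2, map_zero]))
    obtain ⟨Z, hZd, hZmem⟩ := mkZ W hWd
    set Rel₂ : R₂ → R₂ → Prop := fun z w => ∃ x y : R, π₁ x ∈ W ∧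
      c * ι₁ (π₁ x) = ι₁ (π₁ y) ∧ π₂ x = z ∧ π₂ y = w with hRel₂
    have hRfun : ∀ z w w', Rel₂ z w → Rel₂ z w' → w = w' := by
      rintro z w w' ⟨x, y, hx, hxy, hzx, rfl⟩ ⟨x', y', hx', hxy', hzx', rfl⟩
      have hsub : x - x' ∈ P := (hker₂ _).mp (by rw [map_sub, hzx, hzx', sub_self])
      have hpair' : c * ι₁ (π₁ (x - x')) = ι₁ (π₁ (y - y')) := by
        rw [map_sub, map_sub, map_sub, map_sub, mul_sub, hxy, hxy']
      exact hπ₂eq _ _ (keyP _ _ hsub hpair')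
    have hRtot : ∀ z ∈ Z, ∃ w, Rel₂ z w := by
      intro z hz
      obtain ⟨m, hm, rfl⟩ := (hZmem z).mp hz
      obtain ⟨y, hy⟩ := hpair m hm
      exact ⟨π₂ y, m, y, hm, hy, rfl, rfl⟩
    have hRmem : ∀ z w, Rel₂ z w → z ∈ Z := by
      rintro z w ⟨x, y, hx, _, rfl, _⟩
      exact (hZmem _).mpr ⟨x, hx, rfl⟩
    have hRadd : ∀ z w z' w', Rel₂ z w → Rel₂ z' w' → Rel₂ (z + z') (w + w') := by
      rintro z w z' w' ⟨x, y, hx, hxy, rfl, rfl⟩ ⟨x', y', hx', hxy', rfl, rfl⟩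
      refine ⟨x + x', y + y', by rw [map_add]; exact W.add_mem hx hx', ?_,
        by rw [map_add], by rw [map_add]⟩
      rw [map_add, map_add, map_add, map_add, mul_add, hxy, hxy']
    have hRmulR : ∀ z w, Rel₂ z w → ∀ s : R, Rel₂ (z * π₂ s) (w * π₂ s) := by
      rintro z w ⟨x, y, hx, hxy, rfl, rfl⟩ s
      refine ⟨x * s, y * s, by rw [map_mul]; exact W.mul_mem_right _ _ hx, ?_,
        by rw [map_mul], by rw [map_mul]⟩
      rw [map_mul, map_mul, map_mul, map_mul, ← mul_assoc, hxy]
    have hRmulL : ∀ z w, Rel₂ z w → ∀ s : R, Rel₂ (π₂ s * z) (π₂ s * w) := by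
      rintro z w ⟨x, y, hx, hxy, rfl, rfl⟩ s
      refine ⟨s * x, s * y, by rw [map_mul]; exact W.mul_mem_left _ _ hx, ?_,
        by rw [map_mul], by rw [map_mul]⟩
      rw [map_mul, map_mul, map_mul, map_mul, ← mul_assoc, ← hc (ι₁ (π₁ s)), mul_assoc, hxy]
    set f₂ : R₂ → R₂ := fun z => if h : ∃ w, Rel₂ z w then h.choose else 0 with hf₂def
    have hf₂ : ∀ z w, Rel₂ z w → f₂ z = w := by
      intro z w h
      have hex : ∃ w, Rel₂ z w := ⟨w, h⟩
      rw [hf₂def]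
      simp only [dif_pos hex]
      exact hRfun z _ w hex.choose_spec h
    obtain ⟨q₂, hq₂0⟩ := hQ₂.lift Z f₂ hZd
      (by
        intro z hz z' hz'
        obtain ⟨w, hw⟩ := hRtot z hz
        obtain ⟨w', hw'⟩ := hRtot z' hz'
        rw [hf₂ _ _ hw, hf₂ _ _ hw', hf₂ _ _ (hRadd _ _ _ _ hw hw')])
      (by
        intro z hz t
        obtain ⟨w, hw⟩ := hRtot z hz
        obtain ⟨s, rfl⟩ := hπ₂ t
        rw [hf₂ _ _ hw, hf₂ _ _ (hRmulR _ _ hw s)])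
    have hq₂R : ∀ z w, Rel₂ z w → q₂ * ι₂ z = ι₂ w := by
      intro z w h
      rw [hq₂0 z (hRmem _ _ h), hf₂ _ _ h]
    have htrans : ∀ x y : R, c * ι₁ (π₁ x) = ι₁ (π₁ y) → q₂ * ι₂ (π₂ x) = ι₂ (π₂ y) := by
      intro x y hxy
      have h0 : ∀ z ∈ Z, (q₂ * ι₂ (π₂ x) - ι₂ (π₂ y)) * ι₂ z = 0 := by
        intro z hz
        obtain ⟨b, hb, rfl⟩ := (hZmem z).mp hz
        have hrel : Rel₂ (π₂ (x * b)) (π₂ (y * b)) := by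
          refine ⟨x * b, y * b, by rw [map_mul]; exact W.mul_mem_left _ _ hb, ?_, rfl, rfl⟩
          rw [map_mul, map_mul, map_mul, map_mul, ← mul_assoc, hxy]
        have h1 := hq₂R _ _ hrel
        rw [map_mul, map_mul, map_mul, map_mul] at h1
        rw [sub_mul, mul_assoc, h1, sub_self]
      exact sub_eq_zero.mp (hQ₂.ann _ Z hZd h0)
    have huniq : ∀ q' : Q₂,
        (∀ x y : R, c * ι₁ (π₁ x) = ι₁ (π₁ y) → q' * ι₂ (π₂ x) = ι₂ (π₂ y)) → q' = q₂ := by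
      intro q' hq'
      have h0 : ∀ z ∈ Z, (q' - q₂) * ι₂ z = 0 := by
        intro z hz
        obtain ⟨b, hb, rfl⟩ := (hZmem z).mp hz
        obtain ⟨y, hy⟩ := hpair b hb
        rw [sub_mul, hq' b y hy, htrans b y hy, sub_self]
      exact sub_eq_zero.mp (hQ₂.ann _ Z hZd h0)
    have hq₂c : q₂ ∈ Subring.center Q₂ := by
      apply central_of_comm_image hQ₂
      intro t
      obtain ⟨s, rfl⟩ := hπ₂ t
      have h0 : ∀ z ∈ Z, (q₂ * ι₂ (π₂ s) - ι₂ (π₂ s) * q₂) * ι₂ z = 0 := by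
        intro z hz
        obtain ⟨b, hb, rfl⟩ := (hZmem z).mp hz
        obtain ⟨y, hy⟩ := hpair b hb
        have h1 := hq₂R _ _ (hRmulL _ _ ⟨b, y, hb, hy, rfl, rfl⟩ s)
        have h2 := hq₂R _ _ ⟨b, y, hb, hy, rfl, rfl⟩
        have e1 : q₂ * ι₂ (π₂ s) * ι₂ (π₂ b) = ι₂ (π₂ s * π₂ y) := by
          rw [mul_assoc, ← map_mul, h1, map_mul]
        have e2 : ι₂ (π₂ s) * q₂ * ι₂ (π₂ b) = ι₂ (π₂ s * π₂ y) := by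
          rw [mul_assoc, h2, ← map_mul]
        rw [sub_mul, e1, e2, sub_self]
      exact sub_eq_zero.mp (hQ₂.ann _ Z hZd h0)
    have hq₂S : ∀ h : idealStab G P, h • q₂ = q₂ := by
      intro h
      obtain ⟨Zh, hZhmem⟩ : ∃ Zh : TwoSidedIdeal R₂,
          ∀ z, z ∈ Zh ↔ ∃ m : R, π₁ m ∈ W ∧ π₂ ((h : G) • m) = z := by
        refine ⟨TwoSidedIdeal.mk' {z | ∃ m : R, π₁ m ∈ W ∧ π₂ ((h : G) • m) = z}
          ?_ ?_ ?_ ?_ ?_, fun z => TwoSidedIdeal.mem_mk' _ _ _ _ _ _ z⟩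
        · exact ⟨0, by simpa using W.zero_mem, by rw [smul_zero, map_zero]⟩
        · intro x y hx hy
          obtain ⟨m, hm, rfl⟩ := hx; obtain ⟨m', hm', rfl⟩ := hy
          exact ⟨m + m', by rw [map_add]; exact W.add_mem hm hm', by rw [smul_add, map_add]⟩
        · intro x hx
          obtain ⟨m, hm, rfl⟩ := hx
          exact ⟨-m, by rw [map_neg]; exact W.neg_mem hm, by rw [smul_neg, map_neg]⟩
        · intro x y hy
          obtain ⟨m, hm, rfl⟩ := hy
          obtain ⟨s, rfl⟩ := hπ₂ x
          refine ⟨((h : G)⁻¹ • s) * m, by rw [map_mul]; exact W.mul_mem_left _ _ hm, ?_⟩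
          rw [smul_mul', smul_inv_smul, map_mul]
        · intro x y hx
          obtain ⟨m, hm, rfl⟩ := hx
          obtain ⟨s, rfl⟩ := hπ₂ y
          refine ⟨m * ((h : G)⁻¹ • s), by rw [map_mul]; exact W.mul_mem_right _ _ hm, ?_⟩
          rw [smul_mul', smul_inv_smul, map_mul]
      have hZhd : ∀ r₂ : R₂, (∀ z ∈ Zh, r₂ * z = 0) → r₂ = 0 := by
        intro r₂ hr₂
        obtain ⟨s, rfl⟩ := hπ₂ r₂
        rw [hker₂]
        have hs : ((h : G)⁻¹ • s) ∈ P := by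
          apply hdense₂gen W hWd
          intro v hv
          have h1 : π₂ (s * ((h : G) • v)) = 0 := by
            rw [map_mul]
            exact hr₂ _ ((hZhmem _).mpr ⟨v, hv, rfl⟩)
          have h3 := hstabP _ (inv_mem h.2) _ ((hker₂ _).mp h1)
          rwa [smul_mul', inv_smul_smul] at h3
        have h4 := hstabP _ h.2 _ hs
        rwa [smul_inv_smul] at h4
      have h0 : ∀ z ∈ Zh, (h • q₂ - q₂) * ι₂ z = 0 := by
        intro z hz
        obtain ⟨m, hm, rfl⟩ := (hZhmem z).mp hz
        obtain ⟨y, hy⟩ := hpair m hm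
        have hcp : c * ι₁ (π₁ ((h : G) • m)) = ι₁ (π₁ ((h : G) • y)) := by
          rw [hπ₁e, hπ₁e, ← hι₁e, ← hι₁e, ← hcG (h : G), ← smul_mul', hy]
        have h1 := htrans _ _ hcp
        have h2 : (h • q₂) * ι₂ (π₂ ((h : G) • m)) = ι₂ (π₂ ((h : G) • y)) := by
          rw [hπ₂e, hπ₂e, ← hι₂e, ← hι₂e, ← smul_mul', htrans _ _ hy]
        rw [sub_mul, h1, h2, sub_self]
      exact sub_eq_zero.mp (hQ₂.ann _ Zh hZhd h0)
    have hback : ∀ x y : R, inN x → inN y → q₂ * ι₂ (π₂ x) = ι₂ (π₂ y) →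
        c * ι₁ (π₁ x) = ι₁ (π₁ y) := by
      intro x y hxN hyN hq
      have h0 : ∀ z ∈ W, (c * ι₁ (π₁ x) - ι₁ (π₁ y)) * ι₁ z = 0 := by
        intro z hz
        obtain ⟨v, rfl⟩ := hπ₁ z
        have hxv : π₁ (x * v) ∈ W := by rw [map_mul]; exact W.mul_mem_left _ _ hz
        obtain ⟨yv, hyv⟩ := hpair _ hxv
        have hyP : π₁ (yv - y * v) = 0 := by
          rw [hker₁]
          intro g
          have hcp : c * ι₁ (π₁ (g • (x * v))) = ι₁ (π₁ (g • yv)) := by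
            rw [hπ₁e, hπ₁e, ← hι₁e, ← hι₁e, ← hcG g, ← smul_mul', hyv]
          have h1 := htrans _ _ hcp
          by_cases hg : g ∈ idealStab G P
          · set σ : idealStab G P := ⟨g, hg⟩ with hσ
            have e3 : q₂ * ι₂ (π₂ (x * v)) = ι₂ (π₂ (y * v)) := by
              rw [map_mul, map_mul, map_mul, map_mul, ← mul_assoc, hq]
            have h2 : q₂ * ι₂ (π₂ (g • (x * v))) = ι₂ (π₂ (g • (y * v))) := by
              have e1 : π₂ (g • (x * v)) = σ • π₂ (x * v) := hπ₂e σ (x * v)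
              have e2 : π₂ (g • (y * v)) = σ • π₂ (y * v) := hπ₂e σ (y * v)
              rw [e1, e2, ← hι₂e, ← hι₂e, ← hq₂S σ, ← smul_mul', e3]
            have h3 := h1.symm.trans h2
            have h4 : g • yv - g • (y * v) ∈ P := by
              apply (hker₂ _).mp
              rw [map_sub, sub_eq_zero]
              exact hQ₂.inj h3
            rw [smul_sub]
            exact h4
          · have hxvP : g • (x * v) ∈ P := by
              rw [smul_mul']
              exact P.mul_mem_right _ _ (hxN g hg)
            have h5 : ι₂ (π₂ (g • yv)) = 0 := by
              rw [← h1, (hker₂ _).mpr hxvP, map_zero, mul_zero]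
            have h6 : g • yv ∈ P := (hι₂P _).mp h5
            have h7 : g • (y * v) ∈ P := by
              rw [smul_mul']
              exact P.mul_mem_right _ _ (hyN g hg)
            rw [smul_sub]
            exact P.sub_mem h6 h7
        have e1 : c * ι₁ (π₁ x) * ι₁ (π₁ v) = ι₁ (π₁ yv) := by
          rw [mul_assoc, ← map_mul, ← map_mul, hyv]
        have e2 : ι₁ (π₁ y) * ι₁ (π₁ v) = ι₁ (π₁ (y * v)) := by
          rw [← map_mul, ← map_mul]
        rw [sub_mul, e1, e2, ← map_sub, ← map_sub, hyP, map_zero]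
      exact sub_eq_zero.mp (hQ₁.ann _ W hWd h0)
    exact ⟨q₂, ⟨hq₂c, hq₂S⟩, htrans, huniq, hback⟩
  -- THE BACKWARD CONSTRUCTION
  have BWD : ∀ d : Q₂, (∀ u : Q₂, u * d = d * u) → (∀ h : idealStab G P, h • d = d) →
      ∃ q₁ : Q₁, (q₁ ∈ Subring.center Q₁ ∧ ∀ g : G, g • q₁ = q₁) ∧
        (∀ x y : R, inN x → inN y → d * ι₂ (π₂ x) = ι₂ (π₂ y) →
          q₁ * ι₁ (π₁ x) = ι₁ (π₁ y)) ∧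
        (∀ q' : Q₁, (∀ g : G, g • q' = q') →
          (∀ x y : R, inN x → inN y → d * ι₂ (π₂ x) = ι₂ (π₂ y) →
            q' * ι₁ (π₁ x) = ι₁ (π₁ y)) → q' = q₁) ∧
        (∀ x y : R, q₁ * ι₁ (π₁ x) = ι₁ (π₁ y) → d * ι₂ (π₂ x) = ι₂ (π₂ y)) := by
    intro d hd hdS
    obtain ⟨V₂, hV₂d, hV₂dom⟩ := hQ₂.dom d
    set NP : R → R → Prop := fun a b => inN a ∧ inN b ∧ d * ι₂ (π₂ a) = ι₂ (π₂ b)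
      with hNPdef
    have np_mulR : ∀ a b, NP a b → ∀ s, NP (a * s) (b * s) := by
      rintro a b ⟨ha, hb, hab⟩ s
      refine ⟨hNmulR _ _ ha, hNmulR _ _ hb, ?_⟩
      rw [map_mul, map_mul, map_mul, map_mul, ← mul_assoc, hab]
    have np_mulL : ∀ a b, NP a b → ∀ s, NP (s * a) (s * b) := by
      rintro a b ⟨ha, hb, hab⟩ s
      refine ⟨hNmulL _ _ ha, hNmulL _ _ hb, ?_⟩
      rw [map_mul, map_mul, map_mul, map_mul, ← mul_assoc, ← hd (ι₂ (π₂ s)), mul_assoc, hab]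
    have np_add : ∀ a b a' b', NP a b → NP a' b' → NP (a + a') (b + b') := by
      rintro a b a' b' ⟨ha, hb, hab⟩ ⟨ha', hb', hab'⟩
      refine ⟨hNadd _ _ ha ha', hNadd _ _ hb hb', ?_⟩
      rw [map_add, map_add, map_add, map_add, mul_add, hab, hab']
    have np_neg : ∀ a b, NP a b → NP (-a) (-b) := by
      rintro a b ⟨ha, hb, hab⟩
      refine ⟨hNneg _ ha, hNneg _ hb, ?_⟩
      rw [map_neg, map_neg, map_neg, map_neg, mul_neg, hab]
    have np_smul : ∀ (σ : G), σ ∈ idealStab G P → ∀ a b, NP a b → NP (σ • a) (σ • b) := by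
      rintro σ hσ a b ⟨ha, hb, hab⟩
      refine ⟨hNsmul σ hσ a ha, hNsmul σ hσ b hb, ?_⟩
      have e1 : π₂ (σ • a) = (⟨σ, hσ⟩ : idealStab G P) • π₂ a := hπ₂e ⟨σ, hσ⟩ a
      have e2 : π₂ (σ • b) = (⟨σ, hσ⟩ : idealStab G P) • π₂ b := hπ₂e ⟨σ, hσ⟩ b
      rw [e1, e2, ← hι₂e, ← hι₂e, ← hdS ⟨σ, hσ⟩, ← smul_mul', hab]
    have he₀ : ∃ a b : R, NP a b ∧ a ∉ P := by
      have hv : ∃ v : R, π₂ v ∈ V₂ ∧ n₀ * v ∉ P := by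
        by_contra hcon
        push_neg at hcon
        have h1 : π₂ n₀ = 0 := by
          apply hV₂d
          intro z hz
          obtain ⟨v, rfl⟩ := hπ₂ z
          rw [← map_mul]
          exact (hker₂ _).mpr (hcon v hz)
        exact hn₀P ((hker₂ _).mp h1)
      obtain ⟨v, hvV, hvP⟩ := hv
      have hwN : inN (n₀ * v) := hNmulR _ _ hn₀N
      have hwV : π₂ (n₀ * v) ∈ V₂ := by rw [map_mul]; exact V₂.mul_mem_left _ _ hvV
      obtain ⟨r, hr⟩ := prime_step hP hvP hn₀P
      have hwrV : π₂ (n₀ * v * r) ∈ V₂ := by rw [map_mul]; exact V₂.mul_mem_right _ _ hwV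
      obtain ⟨r₂, hr₂⟩ := hV₂dom _ hwrV
      obtain ⟨u, rfl⟩ := hπ₂ r₂
      refine ⟨n₀ * v * r * n₀, u * n₀, ⟨?_, ?_, ?_⟩, hr⟩
      · exact hNmulR _ _ (hNmulR _ _ hwN)
      · exact hNmulL _ _ hn₀N
      · rw [map_mul π₂ (n₀ * v * r) n₀, map_mul ι₂, ← mul_assoc, hr₂, ← map_mul ι₂,
          ← map_mul π₂]
    obtain ⟨a₀, b₀, hnp₀, ha₀⟩ := he₀
    have hDl : ∀ s : R, (∀ a b, NP a b → s * a ∈ P) → s ∈ P := by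
      intro s hs
      by_contra hsP
      obtain ⟨r, hr⟩ := prime_step hP hsP ha₀
      exact hr (by rw [mul_assoc]; exact hs _ _ (np_mulL _ _ hnp₀ r))
    set Rel₁ : R₁ → R₁ → Prop := fun z w => ∃ (n : ℕ) (g : Fin n → G) (a b : Fin n → R),
      (∀ i, NP (a i) (b i)) ∧ π₁ (∑ i, g i • a i) = z ∧ π₁ (∑ i, g i • b i) = w with hRel₁def
    have wd : ∀ (n : ℕ) (g : Fin n → G) (a b : Fin n → R), (∀ i, NP (a i) (b i)) →
        π₁ (∑ i, g i • a i) = 0 → π₁ (∑ i, g i • b i) = 0 := by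
      intro n g a b hab h0
      rw [hker₁] at h0 ⊢
      intro h
      have hsum : ∀ x : Fin n → R, h • ∑ i, g i • x i = ∑ i, (h * g i) • x i := by
        intro x
        rw [Finset.smul_sum]
        exact Finset.sum_congr rfl fun i _ => (mul_smul h (g i) (x i)).symm
      set S := Finset.univ.filter (fun i : Fin n => h * g i ∈ idealStab G P) with hS
      set Sc := Finset.univ.filter (fun i : Fin n => ¬ h * g i ∈ idealStab G P) with hSc
      have hsplit : ∀ x : Fin n → R, ∑ i, (h * g i) • x i =
          (∑ i ∈ S, (h * g i) • x i) + ∑ i ∈ Sc, (h * g i) • x i := by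
        intro x
        rw [hS, hSc]
        exact (Finset.sum_filter_add_sum_filter_not Finset.univ _ _).symm
      have hnotP : ∀ x : Fin n → R, (∀ i, inN (x i)) →
          (∑ i ∈ Sc, (h * g i) • x i) ∈ P := by
        intro x hx
        refine sum_mem fun i hi => ?_
        exact hx i (h * g i) (Finset.mem_filter.mp hi).2
      have hu : (∑ i ∈ S, (h * g i) • a i) ∈ P := by
        have h1 : h • (∑ i, g i • a i) ∈ P := h0 h
        rw [hsum a, hsplit a] at h1
        have h3 := hnotP a (fun i => (hab i).1)
        have h4 := P.sub_mem h1 h3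
        simpa using h4
      have hv : (∑ i ∈ S, (h * g i) • b i) ∈ P := by
        have hterm : d * ι₂ (π₂ (∑ i ∈ S, (h * g i) • a i)) =
            ι₂ (π₂ (∑ i ∈ S, (h * g i) • b i)) := by
          rw [map_sum, map_sum, map_sum, map_sum, Finset.mul_sum]
          apply Finset.sum_congr rfl
          intro i hi
          exact (np_smul _ (Finset.mem_filter.mp hi).2 _ _ (hab i)).2.2
        rw [(hker₂ _).mpr hu, map_zero, mul_zero] at hterm
        exact (hι₂P _).mp hterm.symm
      rw [hsum b, hsplit b]
      exact P.add_mem hv (hnotP b fun i => (hab i).2.1)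
    have rel_cat : ∀ z w z' w', Rel₁ z w → Rel₁ z' w' → Rel₁ (z + z') (w + w') := by
      rintro z w z' w' ⟨n, g, a, b, hab, rfl, rfl⟩ ⟨n', g', a', b', hab', rfl, rfl⟩
      refine ⟨n + n', Fin.append g g', Fin.append a a', Fin.append b b', ?_, ?_, ?_⟩
      · intro i
        refine Fin.addCases (fun j => ?_) (fun j => ?_) i
        · simpa [Fin.append_left] using hab j
        · simpa [Fin.append_right] using hab' j
      · rw [← map_add]
        congr 1
        rw [Fin.sum_univ_add]
        simp [Fin.append_left, Fin.append_right]
      · rw [← map_add]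
        congr 1
        rw [Fin.sum_univ_add]
        simp [Fin.append_left, Fin.append_right]
    have rel_neg : ∀ z w, Rel₁ z w → Rel₁ (-z) (-w) := by
      rintro z w ⟨n, g, a, b, hab, rfl, rfl⟩
      refine ⟨n, g, fun i => -(a i), fun i => -(b i), fun i => np_neg _ _ (hab i), ?_, ?_⟩
      · rw [← map_neg]
        congr 1
        simp [smul_neg]
      · rw [← map_neg]
        congr 1
        simp [smul_neg]
    have rel_fun : ∀ z w w', Rel₁ z w → Rel₁ z w' → w = w' := by
      intro z w w' h1 h2
      obtain ⟨n, g, a, b, hab, hza, hzb⟩ := rel_cat _ _ _ _ h1 (rel_neg _ _ h2)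
      have h4 : π₁ (∑ i, g i • a i) = 0 := by rw [hza]; exact add_neg_cancel z
      have h5 := wd n g a b hab h4
      rw [hzb] at h5
      exact add_neg_eq_zero.mp h5
    have rel_zero : Rel₁ 0 0 :=
      ⟨0, Fin.elim0, Fin.elim0, Fin.elim0, fun i => i.elim0,
        by rw [Fin.sum_univ_zero, map_zero], by rw [Fin.sum_univ_zero, map_zero]⟩
    have rel_pair : ∀ a b, NP a b → Rel₁ (π₁ a) (π₁ b) := by
      intro a b h
      exact ⟨1, fun _ => 1, fun _ => a, fun _ => b, fun _ => h,
        by rw [Fin.sum_univ_one, one_smul], by rw [Fin.sum_univ_one, one_smul]⟩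
    have rel_mulR : ∀ z w, Rel₁ z w → ∀ s : R, Rel₁ (z * π₁ s) (w * π₁ s) := by
      rintro z w ⟨n, g, a, b, hab, rfl, rfl⟩ s
      refine ⟨n, g, fun i => a i * ((g i)⁻¹ • s), fun i => b i * ((g i)⁻¹ • s),
        fun i => np_mulR _ _ (hab i) _, ?_, ?_⟩
      · rw [← map_mul]
        congr 1
        rw [Finset.sum_mul]
        exact Finset.sum_congr rfl fun i _ => by rw [smul_mul', smul_inv_smul]
      · rw [← map_mul]
        congr 1
        rw [Finset.sum_mul]
        exact Finset.sum_congr rfl fun i _ => by rw [smul_mul', smul_inv_smul]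
    have rel_mulL : ∀ z w, Rel₁ z w → ∀ s : R, Rel₁ (π₁ s * z) (π₁ s * w) := by
      rintro z w ⟨n, g, a, b, hab, rfl, rfl⟩ s
      refine ⟨n, g, fun i => ((g i)⁻¹ • s) * a i, fun i => ((g i)⁻¹ • s) * b i,
        fun i => np_mulL _ _ (hab i) _, ?_, ?_⟩
      · rw [← map_mul]
        congr 1
        rw [Finset.mul_sum]
        exact Finset.sum_congr rfl fun i _ => by rw [smul_mul', smul_inv_smul]
      · rw [← map_mul]
        congr 1
        rw [Finset.mul_sum]
        exact Finset.sum_congr rfl fun i _ => by rw [smul_mul', smul_inv_smul]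
    have rel_smul : ∀ z w, Rel₁ z w → ∀ h : G, Rel₁ (h • z) (h • w) := by
      rintro z w ⟨n, g, a, b, hab, rfl, rfl⟩ h
      refine ⟨n, fun i => h * g i, a, b, hab, ?_, ?_⟩
      · rw [← hπ₁e]
        congr 1
        rw [Finset.smul_sum]
        exact Finset.sum_congr rfl fun i _ => mul_smul h (g i) (a i)
      · rw [← hπ₁e]
        congr 1
        rw [Finset.smul_sum]
        exact Finset.sum_congr rfl fun i _ => mul_smul h (g i) (b i)
    obtain ⟨D₁, hD₁mem⟩ : ∃ D₁ : TwoSidedIdeal R₁, ∀ z, z ∈ D₁ ↔ ∃ w, Rel₁ z w := by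
      refine ⟨TwoSidedIdeal.mk' {z | ∃ w, Rel₁ z w} ⟨0, rel_zero⟩ ?_ ?_ ?_ ?_,
        fun z => TwoSidedIdeal.mem_mk' _ _ _ _ _ _ z⟩
      · rintro x y ⟨w, hw⟩ ⟨w', hw'⟩
        exact ⟨w + w', rel_cat _ _ _ _ hw hw'⟩
      · rintro x ⟨w, hw⟩
        exact ⟨-w, rel_neg _ _ hw⟩
      · rintro x y ⟨w, hw⟩
        obtain ⟨s, rfl⟩ := hπ₁ x
        exact ⟨π₁ s * w, rel_mulL _ _ hw s⟩
      · rintro x y ⟨w, hw⟩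
        obtain ⟨s, rfl⟩ := hπ₁ y
        exact ⟨w * π₁ s, rel_mulR _ _ hw s⟩
    have hD₁d : ∀ r₁ : R₁, (∀ z ∈ D₁, r₁ * z = 0) → r₁ = 0 := by
      intro r₁ hr₁
      obtain ⟨s, rfl⟩ := hπ₁ r₁
      rw [hker₁]
      intro h
      apply hDl
      intro a b hab
      have hm : π₁ (h⁻¹ • a) ∈ D₁ := by
        rw [hπ₁e]
        exact (hD₁mem _).mpr ⟨_, rel_smul _ _ (rel_pair a b hab) h⁻¹⟩
      have h1 : π₁ (s * (h⁻¹ • a)) = 0 := by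
        rw [map_mul]
        exact hr₁ _ hm
      have h2 := (hker₁ _).mp h1 h
      rwa [smul_mul', smul_inv_smul] at h2
    set f₁ : R₁ → R₁ := fun z => if h : ∃ w, Rel₁ z w then h.choose else 0 with hf₁def
    have hf₁ : ∀ z w, Rel₁ z w → f₁ z = w := by
      intro z w h
      have hex : ∃ w, Rel₁ z w := ⟨w, h⟩
      rw [hf₁def]
      simp only [dif_pos hex]
      exact rel_fun z _ w hex.choose_spec h
    obtain ⟨q₁, hq₁0⟩ := hQ₁.lift D₁ f₁ hD₁d
      (by
        intro z hz z' hz'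
        obtain ⟨w, hw⟩ := (hD₁mem z).mp hz
        obtain ⟨w', hw'⟩ := (hD₁mem z').mp hz'
        rw [hf₁ _ _ hw, hf₁ _ _ hw', hf₁ _ _ (rel_cat _ _ _ _ hw hw')])
      (by
        intro z hz t
        obtain ⟨w, hw⟩ := (hD₁mem z).mp hz
        obtain ⟨s, rfl⟩ := hπ₁ t
        rw [hf₁ _ _ hw, hf₁ _ _ (rel_mulR _ _ hw s)])
    have hq₁R : ∀ z w, Rel₁ z w → q₁ * ι₁ z = ι₁ w := by
      intro z w h
      rw [hq₁0 z ((hD₁mem z).mpr ⟨w, h⟩), hf₁ _ _ h]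
    have hspec : ∀ x y : R, inN x → inN y → d * ι₂ (π₂ x) = ι₂ (π₂ y) →
        q₁ * ι₁ (π₁ x) = ι₁ (π₁ y) := fun x y hx hy hxy =>
      hq₁R _ _ (rel_pair x y ⟨hx, hy, hxy⟩)
    have hq₁c : q₁ ∈ Subring.center Q₁ := by
      apply central_of_comm_image hQ₁
      intro t
      obtain ⟨s, rfl⟩ := hπ₁ t
      have h0 : ∀ z ∈ D₁, (q₁ * ι₁ (π₁ s) - ι₁ (π₁ s) * q₁) * ι₁ z = 0 := by
        intro z hz
        obtain ⟨w, hw⟩ := (hD₁mem z).mp hz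
        have h1 := hq₁R _ _ (rel_mulL _ _ hw s)
        have h2 := hq₁R _ _ hw
        have e1 : q₁ * ι₁ (π₁ s) * ι₁ z = ι₁ (π₁ s * w) := by
          rw [mul_assoc, ← map_mul, h1]
        have e2 : ι₁ (π₁ s) * q₁ * ι₁ z = ι₁ (π₁ s * w) := by
          rw [mul_assoc, h2, ← map_mul]
        rw [sub_mul, e1, e2, sub_self]
      exact sub_eq_zero.mp (hQ₁.ann _ D₁ hD₁d h0)
    have hq₁G : ∀ h : G, h • q₁ = q₁ := by
      intro h
      have h0 : ∀ z ∈ D₁, (h • q₁ - q₁) * ι₁ z = 0 := by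
        intro z hz
        obtain ⟨w, hw⟩ := (hD₁mem z).mp hz
        have h1 : (h • q₁) * ι₁ z = ι₁ w := by
          have e1 : ι₁ z = h • ι₁ (h⁻¹ • z) := by rw [hι₁e, smul_inv_smul]
          rw [e1, ← smul_mul', hq₁R _ _ (rel_smul _ _ hw h⁻¹), hι₁e, smul_inv_smul]
        rw [sub_mul, h1, hq₁R _ _ hw, sub_self]
      exact sub_eq_zero.mp (hQ₁.ann _ D₁ hD₁d h0)
    have huniq : ∀ q' : Q₁, (∀ g : G, g • q' = q') →
        (∀ x y : R, inN x → inN y → d * ι₂ (π₂ x) = ι₂ (π₂ y) →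
          q' * ι₁ (π₁ x) = ι₁ (π₁ y)) → q' = q₁ := by
      intro q' hq'G hq's
      have h0 : ∀ z ∈ D₁, (q' - q₁) * ι₁ z = 0 := by
        intro z hz
        obtain ⟨w, hw⟩ := (hD₁mem z).mp hz
        have hagree : q' * ι₁ z = ι₁ w := by
          obtain ⟨n, g, a, b, hab, rfl, rfl⟩ := hw
          rw [map_sum, map_sum, map_sum, map_sum, Finset.mul_sum]
          apply Finset.sum_congr rfl
          intro i _
          rw [hπ₁e, hπ₁e, ← hι₁e, ← hι₁e, ← hq'G (g i), ← smul_mul',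
            hq's _ _ (hab i).1 (hab i).2.1 (hab i).2.2]
        rw [sub_mul, hagree, hq₁R _ _ hw, sub_self]
      exact sub_eq_zero.mp (hQ₁.ann _ D₁ hD₁d h0)
    have hbridge : ∀ x y : R, q₁ * ι₁ (π₁ x) = ι₁ (π₁ y) → d * ι₂ (π₂ x) = ι₂ (π₂ y) := by
      intro x y hxy
      obtain ⟨Z₂, hZ₂mem⟩ : ∃ Z₂ : TwoSidedIdeal R₂,
          ∀ z, z ∈ Z₂ ↔ ∃ a b : R, NP a b ∧ π₂ a = z := by
        have np_zero : NP 0 0 := by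
          refine ⟨fun g hg => by rw [smul_zero]; exact P.zero_mem,
            fun g hg => by rw [smul_zero]; exact P.zero_mem, ?_⟩
          rw [map_zero, map_zero, mul_zero]
        refine ⟨TwoSidedIdeal.mk' {z | ∃ a b : R, NP a b ∧ π₂ a = z}
          ⟨0, 0, np_zero, map_zero π₂⟩ ?_ ?_ ?_ ?_,
          fun z => TwoSidedIdeal.mem_mk' _ _ _ _ _ _ z⟩
        · rintro x' y' ⟨a, b, hab, rfl⟩ ⟨a', b', hab', rfl⟩
          exact ⟨a + a', b + b', np_add _ _ _ _ hab hab', by rw [map_add]⟩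
        · rintro x' ⟨a, b, hab, rfl⟩
          exact ⟨-a, -b, np_neg _ _ hab, by rw [map_neg]⟩
        · rintro x' y' ⟨a, b, hab, rfl⟩
          obtain ⟨s, rfl⟩ := hπ₂ x'
          exact ⟨s * a, s * b, np_mulL _ _ hab s, by rw [map_mul]⟩
        · rintro x' y' ⟨a, b, hab, rfl⟩
          obtain ⟨s, rfl⟩ := hπ₂ y'
          exact ⟨a * s, b * s, np_mulR _ _ hab s, by rw [map_mul]⟩
      have hZ₂d : ∀ r₂ : R₂, (∀ z ∈ Z₂, r₂ * z = 0) → r₂ = 0 := by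
        intro r₂ hr₂
        obtain ⟨s, rfl⟩ := hπ₂ r₂
        rw [hker₂]
        apply hDl
        intro a b hab
        rw [← hker₂, map_mul]
        exact hr₂ _ ((hZ₂mem _).mpr ⟨a, b, hab, rfl⟩)
      have h0 : ∀ z ∈ Z₂, (d * ι₂ (π₂ x) - ι₂ (π₂ y)) * ι₂ z = 0 := by
        intro z hz
        obtain ⟨m, bm, hm, rfl⟩ := (hZ₂mem z).mp hz
        have h1 : NP (x * m) (x * bm) := np_mulL _ _ hm x
        have h2 := hspec _ _ h1.1 h1.2.1 h1.2.2
        have h3 : q₁ * ι₁ (π₁ (x * m)) = ι₁ (π₁ (y * m)) := by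
          rw [map_mul, map_mul, map_mul, map_mul, ← mul_assoc, hxy]
        have h4 : π₁ (x * bm - y * m) = 0 := by
          rw [map_sub, sub_eq_zero]
          exact hQ₁.inj (h2.symm.trans h3)
        have h5 : π₂ (x * bm) = π₂ (y * m) := hπ₂eq _ _ (hkerP _ h4)
        have e4 : d * ι₂ (π₂ x) * ι₂ (π₂ m) = ι₂ (π₂ (x * bm)) := by
          rw [mul_assoc, ← map_mul, ← map_mul, h1.2.2]
        have e5 : ι₂ (π₂ y) * ι₂ (π₂ m) = ι₂ (π₂ (y * m)) := by
          rw [← map_mul, ← map_mul]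
        rw [sub_mul, e4, e5, h5, sub_self]
      exact sub_eq_zero.mp (hQ₂.ann _ Z₂ hZ₂d h0)
    exact ⟨q₁, ⟨hq₁c, hq₁G⟩, hspec, huniq, hbridge⟩
  -- ASSEMBLY
  have memiff₁ : ∀ q : Q₁, q ∈ invCenter G Q₁ ↔
      q ∈ Subring.center Q₁ ∧ ∀ g : G, g • q = q := fun q => Iff.rfl
  have memiff₂ : ∀ q : Q₂, q ∈ invCenter (idealStab G P) Q₂ ↔
      q ∈ Subring.center Q₂ ∧ ∀ h : idealStab G P, h • q = q := fun q => Iff.rfl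
  have FWD' : ∀ c : invCenter G Q₁, ∃ q₂ : invCenter (idealStab G P) Q₂,
      (∀ x y : R, (c : Q₁) * ι₁ (π₁ x) = ι₁ (π₁ y) → (q₂ : Q₂) * ι₂ (π₂ x) = ι₂ (π₂ y)) ∧
      (∀ q' : Q₂, (∀ x y : R, (c : Q₁) * ι₁ (π₁ x) = ι₁ (π₁ y) →
        q' * ι₂ (π₂ x) = ι₂ (π₂ y)) → q' = q₂) ∧
      (∀ x y : R, inN x → inN y → (q₂ : Q₂) * ι₂ (π₂ x) = ι₂ (π₂ y) →
        (c : Q₁) * ι₁ (π₁ x) = ι₁ (π₁ y)) := by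
    intro c
    have hm := (memiff₁ (c : Q₁)).mp c.2
    obtain ⟨q₂, hmem, h1, h2, h3⟩ := FWD (c : Q₁)
      (fun u => Subring.mem_center_iff.mp hm.1 u) hm.2
    exact ⟨⟨q₂, (memiff₂ q₂).mpr hmem⟩, h1, h2, h3⟩
  have BWD' : ∀ dd : invCenter (idealStab G P) Q₂, ∃ q₁ : invCenter G Q₁,
      (∀ x y : R, inN x → inN y → (dd : Q₂) * ι₂ (π₂ x) = ι₂ (π₂ y) →
        (q₁ : Q₁) * ι₁ (π₁ x) = ι₁ (π₁ y)) ∧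
      (∀ q' : Q₁, (∀ g : G, g • q' = q') →
        (∀ x y : R, inN x → inN y → (dd : Q₂) * ι₂ (π₂ x) = ι₂ (π₂ y) →
          q' * ι₁ (π₁ x) = ι₁ (π₁ y)) → q' = q₁) ∧
      (∀ x y : R, (q₁ : Q₁) * ι₁ (π₁ x) = ι₁ (π₁ y) →
        (dd : Q₂) * ι₂ (π₂ x) = ι₂ (π₂ y)) := by
    intro dd
    have hm := (memiff₂ (dd : Q₂)).mp dd.2
    obtain ⟨q₁, hmem, h1, h2, h3⟩ := BWD (dd : Q₂)
      (fun u => Subring.mem_center_iff.mp hm.1 u) hm.2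
    exact ⟨⟨q₁, (memiff₁ q₁).mpr hmem⟩, h1, h2, h3⟩
  choose E hE1 hE2 hE3 using FWD'
  choose Ψ hΨ1 hΨ2 hΨ3 using BWD'
  have hcinv : ∀ c : invCenter G Q₁, ∀ g : G, g • (c : Q₁) = c :=
    fun c => ((memiff₁ (c : Q₁)).mp c.2).2
  have hleft : ∀ c : invCenter G Q₁, Ψ (E c) = c := by
    intro c
    refine Subtype.ext ?_
    exact (hΨ2 (E c) (c : Q₁) (hcinv c) (fun x y hx hy hq => hE3 c x y hx hy hq)).symm
  have hright : ∀ dd : invCenter (idealStab G P) Q₂, E (Ψ dd) = dd := by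
    intro dd
    refine Subtype.ext ?_
    exact (hE2 (Ψ dd) (dd : Q₂) (fun x y hxy => hΨ3 dd x y hxy)).symm
  have hadd : ∀ c c' : invCenter G Q₁, E (c + c') = E c + E c' := by
    intro c c'
    refine Subtype.ext ?_
    have hprop : ∀ x y : R, ((c + c' : invCenter G Q₁) : Q₁) * ι₁ (π₁ x) = ι₁ (π₁ y) →
        ((E c : Q₂) + (E c' : Q₂)) * ι₂ (π₂ x) = ι₂ (π₂ y) := by
      intro x y hxy
      have hcc' : ((c : Q₁) + (c' : Q₁)) * ι₁ (π₁ x) = ι₁ (π₁ y) := hxy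
      obtain ⟨W, hWd, hWdom⟩ := hQ₁.dom (c : Q₁)
      obtain ⟨W', hW'd, hW'dom⟩ := hQ₁.dom (c' : Q₁)
      have hWW'd : ∀ r : R₁, (∀ u ∈ W ⊓ W', r * u = 0) → r = 0 := by
        intro r hr
        apply hWd
        intro u hu
        apply hW'd
        intro v hv
        rw [mul_assoc]
        exact hr (u * v) ((TwoSidedIdeal.mem_inf _).mpr
          ⟨W.mul_mem_right _ _ hu, W'.mul_mem_left _ _ hv⟩)
      obtain ⟨Z, hZd, hZmem⟩ := mkZ (W ⊓ W') hWW'd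
      have h0 : ∀ z ∈ Z, (((E c : Q₂) + (E c' : Q₂)) * ι₂ (π₂ x) - ι₂ (π₂ y)) * ι₂ z = 0 := by
        intro z hz
        obtain ⟨m, hm, rfl⟩ := (hZmem z).mp hz
        have hmW : π₁ m ∈ W := ((TwoSidedIdeal.mem_inf _).mp hm).1
        have hmW' : π₁ m ∈ W' := ((TwoSidedIdeal.mem_inf _).mp hm).2
        have hxmW : π₁ (x * m) ∈ W := by rw [map_mul]; exact W.mul_mem_left _ _ hmW
        have hxmW' : π₁ (x * m) ∈ W' := by rw [map_mul]; exact W'.mul_mem_left _ _ hmW'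
        obtain ⟨u, hu⟩ := hWdom _ hxmW
        obtain ⟨u', hu'⟩ := hW'dom _ hxmW'
        obtain ⟨uu, rfl⟩ := hπ₁ u
        obtain ⟨uu', rfl⟩ := hπ₁ u'
        have t1 := hE1 c _ _ hu
        have t2 := hE1 c' _ _ hu'
        have hker : uu + uu' - y * m ∈ P := by
          apply hkerP
          have l1 : ((c : Q₁) + (c' : Q₁)) * ι₁ (π₁ (x * m)) = ι₁ (π₁ (uu + uu')) := by
            rw [add_mul, hu, hu', ← map_add, ← map_add]
          have l2 : ((c : Q₁) + (c' : Q₁)) * ι₁ (π₁ (x * m)) = ι₁ (π₁ (y * m)) := by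
            rw [map_mul π₁ x m, map_mul ι₁ (π₁ x) (π₁ m), ← mul_assoc, hcc',
              ← map_mul ι₁, ← map_mul π₁]
          have e : ι₁ (π₁ (uu + uu' - y * m)) = 0 := by
            rw [map_sub, map_sub, ← l1, ← l2, sub_self]
          exact hQ₁.inj (by rw [e, map_zero])
        have e6 : ((E c : Q₂) + (E c' : Q₂)) * ι₂ (π₂ x) * ι₂ (π₂ m) = ι₂ (π₂ (uu + uu')) := by
          rw [mul_assoc, ← map_mul ι₂, ← map_mul π₂, add_mul, t1, t2, ← map_add, ← map_add]
        have e7 : ι₂ (π₂ y) * ι₂ (π₂ m) = ι₂ (π₂ (y * m)) := by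
          rw [← map_mul, ← map_mul]
        have e8 : π₂ (uu + uu') = π₂ (y * m) := hπ₂eq _ _ hker
        rw [sub_mul, e6, e7, e8, sub_self]
      exact sub_eq_zero.mp (hQ₂.ann _ Z hZd h0)
    exact (hE2 (c + c') _ hprop).symm
  have hmul : ∀ c c' : invCenter G Q₁, E (c * c') = E c * E c' := by
    intro c c'
    refine Subtype.ext ?_
    have hprop : ∀ x y : R, ((c * c' : invCenter G Q₁) : Q₁) * ι₁ (π₁ x) = ι₁ (π₁ y) →
        ((E c : Q₂) * (E c' : Q₂)) * ι₂ (π₂ x) = ι₂ (π₂ y) := by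
      intro x y hxy
      have hcc' : ((c : Q₁) * (c' : Q₁)) * ι₁ (π₁ x) = ι₁ (π₁ y) := hxy
      obtain ⟨W, hWd, hWdom⟩ := hQ₁.dom (c : Q₁)
      obtain ⟨W', hW'd, hW'dom⟩ := hQ₁.dom (c' : Q₁)
      obtain ⟨Z, hZd, hZmem⟩ := mkZ W hWd
      obtain ⟨Z', hZ'd, hZ'mem⟩ := mkZ W' hW'd
      have h0 : ∀ z' ∈ Z',
          ((E c : Q₂) * (E c' : Q₂) * ι₂ (π₂ x) - ι₂ (π₂ y)) * ι₂ z' = 0 := by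
        intro z' hz'
        obtain ⟨m, hm, rfl⟩ := (hZ'mem z').mp hz'
        have h1 : ∀ z ∈ Z,
            (((E c : Q₂) * (E c' : Q₂) * ι₂ (π₂ x) - ι₂ (π₂ y)) * ι₂ (π₂ m)) * ι₂ z = 0 := by
          intro z hz
          obtain ⟨m₂, hm₂, rfl⟩ := (hZmem z).mp hz
          have hxmW' : π₁ (x * m) ∈ W' := by rw [map_mul]; exact W'.mul_mem_left _ _ hm
          obtain ⟨u, hu⟩ := hW'dom _ hxmW'
          obtain ⟨uu, rfl⟩ := hπ₁ u
          have humW : π₁ (uu * m₂) ∈ W := by rw [map_mul]; exact W.mul_mem_left _ _ hm₂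
          obtain ⟨v, hv⟩ := hWdom _ humW
          obtain ⟨vv, rfl⟩ := hπ₁ v
          have t2 := hE1 c' _ _ hu
          have t1 := hE1 c _ _ hv
          have hker : vv - y * m * m₂ ∈ P := by
            apply hkerP
            have l1 : ι₁ (π₁ vv) =
                (c : Q₁) * ((c' : Q₁) * (ι₁ (π₁ x) * (ι₁ (π₁ m) * ι₁ (π₁ m₂)))) := by
              rw [← hv, map_mul π₁ uu m₂, map_mul ι₁ (π₁ uu) (π₁ m₂), ← hu,
                map_mul π₁ x m, map_mul ι₁ (π₁ x) (π₁ m)]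
              simp only [mul_assoc]
            have l2 : ι₁ (π₁ (y * m * m₂)) =
                (c : Q₁) * ((c' : Q₁) * (ι₁ (π₁ x) * (ι₁ (π₁ m) * ι₁ (π₁ m₂)))) := by
              rw [map_mul π₁ (y * m) m₂, map_mul ι₁ (π₁ (y * m)) (π₁ m₂), map_mul π₁ y m,
                map_mul ι₁ (π₁ y) (π₁ m), ← hcc']
              simp only [mul_assoc]
            have l3 : π₁ vv = π₁ (y * m * m₂) := hQ₁.inj (l1.trans l2.symm)
            rw [map_sub, l3, sub_self]
          have eA : (E c : Q₂) * (E c' : Q₂) * ι₂ (π₂ x) * ι₂ (π₂ m) * ι₂ (π₂ m₂) =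
              ι₂ (π₂ vv) := by
            have s1 : ι₂ (π₂ x) * ι₂ (π₂ m) = ι₂ (π₂ (x * m)) := by
              rw [← map_mul, ← map_mul]
            rw [mul_assoc ((E c : Q₂) * (E c' : Q₂)), s1, mul_assoc (E c : Q₂), t2]
            rw [mul_assoc (E c : Q₂), ← map_mul ι₂, ← map_mul π₂, t1]
          have eB : ι₂ (π₂ y) * ι₂ (π₂ m) * ι₂ (π₂ m₂) = ι₂ (π₂ (y * m * m₂)) := by
            rw [← map_mul, ← map_mul, ← map_mul, ← map_mul]
          have eC : π₂ vv = π₂ (y * m * m₂) := hπ₂eq _ _ hker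
          rw [sub_mul, sub_mul, eA, eB, eC, sub_self]
        exact hQ₂.ann _ Z hZd h1
      exact sub_eq_zero.mp (hQ₂.ann _ Z' hZ'd h0)
    exact (hE2 (c * c') _ hprop).symm
  refine ⟨{ toFun := E, invFun := Ψ, left_inv := hleft, right_inv := hright,
            map_mul' := hmul, map_add' := hadd }, ?_⟩
  intro c x y hxy
  exact hE1 c x y hxy
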